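/- If every vertex has threshold at least 1 (so no vertex activates spontaneously) and S, S' ⊆ V with Active[S,λ] ⊇ A and S' obtained from S by replacing a leaf (degree-1 vertex with threshold 1) v ∈ S by its unique neighbor, then |S'| ≤ |S| and Active[S',λ] ⊇ A. -/

import Mathlib

open scoped Classical

noncomputable def Active {V : Type*} [Fintype V] (G : SimpleGraph V) (t : V → ℕ)
    (S : Finset V) : ℕ → Finset V
  | 0 => S
  | i + 1 => Active G t S i ∪
      Finset.univ.filter (fun u =>
        t u ≤ (Finset.univ.filter (fun w => G.Adj u w ∧ w ∈ Active G t S i)).card)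

private lemma active_mono_step {V : Type*} [Fintype V] (G : SimpleGraph V) (t : V → ℕ)
    {S S' : Finset V} {i j : ℕ} (h : Active G t S i ⊆ Active G t S' j) :
    Active G t S (i+1) ⊆ Active G t S' (j+1) := by
  intro u hu
  simp only [Active, Finset.mem_union, Finset.mem_filter, Finset.mem_univ, true_and] at hu ⊢
  rcases hu with hu | hu
  · exact Or.inl (h hu)
  · refine Or.inr (le_trans hu (Finset.card_le_card ?_))
    intro x hx
    simp only [Finset.mem_filter, Finset.mem_univ, true_and] at hx ⊢
    exact ⟨hx.1, h hx.2⟩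

theorem leaf_replacement {V : Type*} [Fintype V] (T : SimpleGraph V) (hT : T.IsTree)
    (t : V → ℕ) (ht : ∀ u, 1 ≤ t u) (lam : ℕ) (hlam : 1 ≤ lam) (A : Finset V)
    (S S' : Finset V) (v w : V)
    (hleaf : T.degree v = 1) (htv : t v = 1) (hvS : v ∈ S) (hvw : T.Adj v w)
    (hS' : S' = insert w (S.erase v))
    (hA : A ⊆ Active T t S lam) :
    S'.card ≤ S.card ∧ A ⊆ Active T t S' lam := by
  subst hS'
  have hne : v ≠ w := T.ne_of_adj hvw
  have hnb : ∀ u, T.Adj u v → u = w := by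
    intro u hu
    have hcard : (T.neighborFinset v).card ≤ 1 := le_of_eq hleaf
    have h1 : u ∈ T.neighborFinset v := by
      rw [SimpleGraph.mem_neighborFinset]; exact hu.symm
    have h2 : w ∈ T.neighborFinset v := by
      rw [SimpleGraph.mem_neighborFinset]; exact hvw
    exact Finset.card_le_one.mp hcard u h1 w h2
  constructor
  · have hpos : 1 ≤ S.card := Finset.card_pos.mpr ⟨v, hvS⟩
    calc (insert w (S.erase v)).card ≤ (S.erase v).card + 1 := Finset.card_insert_le _ _
      _ = S.card := by rw [Finset.card_erase_of_mem hvS]; omega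
  · -- base case: step 1
    have h1 : Active T t S 1 ⊆ Active T t (insert w (S.erase v)) 1 := by
      intro u hu
      change u ∈ Active T t S (0+1) at hu
      change u ∈ Active T t (insert w (S.erase v)) (0+1)
      rw [Active.eq_2] at hu ⊢
      simp only [Finset.mem_union, Finset.mem_filter, Finset.mem_univ, true_and] at hu ⊢
      by_cases huv : u = v
      · subst huv
        refine Or.inr ?_
        rw [htv]
        refine Finset.card_pos.mpr ⟨w, ?_⟩
        simp only [Finset.mem_filter, Finset.mem_univ, true_and]
        exact ⟨hvw, Finset.mem_insert_self _ _⟩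
      · by_cases huw : u = w
        · exact Or.inl (huw ▸ Finset.mem_insert_self _ _)
        · rcases hu with hu | hu
          · exact Or.inl (Finset.mem_insert_of_mem (Finset.mem_erase.mpr ⟨huv, hu⟩))
          · refine Or.inr (le_trans hu (Finset.card_le_card ?_))
            intro x hx
            simp only [Finset.mem_filter, Finset.mem_univ, true_and] at hx ⊢
            refine ⟨hx.1, Finset.mem_insert_of_mem (Finset.mem_erase.mpr ⟨?_, hx.2⟩)⟩
            intro hxv
            exact huw (hnb u (hxv ▸ hx.1))
    have key : ∀ i, Active T t S (i+1) ⊆ Active T t (insert w (S.erase v)) (i+1) := by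
      intro i
      induction i with
      | zero => exact h1
      | succ n ih => exact active_mono_step T t ih
    obtain ⟨m, rfl⟩ : ∃ m, lam = m + 1 := ⟨lam - 1, by omega⟩
    exact hA.trans (key m)
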